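/- Let Γ ⊂ ℤ² be a finite nonempty convex domain. The map π : ℋ_ℚ^Γ/ℋ_ℤ^Γ → (ℚ/ℤ)^{∂Γ} sending the class of H to the family ((Δ_Γ H)(b) mod ℤ)_{b ∈ ∂Γ} is a well-defined surjective group homomorphism, and its kernel is isomorphic to the sandpile group G_Γ via the map sending the class of H to [−Δ_Γ H]. In other words, there is an exact sequence 0 → G_Γ → ℋ_ℚ^Γ/ℋ_ℤ^Γ → (ℚ/ℤ)^{∂Γ} → 0. -/

import Mathlib

/-- Two vertices of `ℤ²` are adjacent iff their Euclidean distance is `1`. -/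
def adj (u v : ℤ × ℤ) : Prop := (u.1 - v.1) ^ 2 + (u.2 - v.2) ^ 2 = 1

instance : DecidableRel adj := fun u v => by unfold adj; infer_instance

/-- The reduced Laplacian of a finite domain `Γ ⊂ ℤ²`. -/
def lap {R : Type*} [CommRing R] (Γ : Finset (ℤ × ℤ)) (f : ↥Γ → R) : ↥Γ → R :=
  fun v => (∑ w ∈ Γ.attach.filter (fun w => adj w.1 v.1), f w) - 4 * f v

lemma lap_add {R : Type*} [CommRing R] (Γ : Finset (ℤ × ℤ)) (f g : ↥Γ → R) :
    lap Γ (f + g) = lap Γ f + lap Γ g := by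
  funext v; simp [lap, Finset.sum_add_distrib]; ring

lemma lap_neg {R : Type*} [CommRing R] (Γ : Finset (ℤ × ℤ)) (f : ↥Γ → R) :
    lap Γ (-f) = -(lap Γ f) := by
  funext v; simp [lap]; ring

lemma lap_smul {R : Type*} [CommRing R] (Γ : Finset (ℤ × ℤ)) (c : R) (f : ↥Γ → R) :
    lap Γ (c • f) = c • lap Γ f := by
  funext v
  simp only [lap, Pi.smul_apply, smul_eq_mul, mul_sub, Finset.mul_sum]
  ring

lemma lap_zero {R : Type*} [CommRing R] (Γ : Finset (ℤ × ℤ)) :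
    lap Γ (0 : ↥Γ → R) = 0 := by
  funext v; simp [lap]

/-- The boundary `∂Γ`: vertices of `Γ` adjacent to some vertex of `ℤ² \ Γ`. -/
noncomputable def boundary (Γ : Finset (ℤ × ℤ)) : Finset (ℤ × ℤ) :=
  @Finset.filter _ (fun v => ∃ w : ℤ × ℤ, w ∉ Γ ∧ adj w v) (Classical.decPred _) Γ

lemma boundary_subset (Γ : Finset (ℤ × ℤ)) : boundary Γ ⊆ Γ :=
  @Finset.filter_subset _ (fun v => ∃ w : ℤ × ℤ, w ∉ Γ ∧ adj w v) (Classical.decPred _) Γ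

/-- A function on `Γ` is harmonic if its Laplacian vanishes on the interior `Γ \ ∂Γ`. -/
def Harmonic {R : Type*} [CommRing R] (Γ : Finset (ℤ × ℤ)) (f : ↥Γ → R) : Prop :=
  ∀ v : ↥Γ, (v : ℤ × ℤ) ∉ boundary Γ → lap Γ f v = 0

/-- `Γ ⊂ ℤ²` is a convex domain if it is the set of lattice points of a
convex open subset of `ℝ²`. -/
def IsConvexDomain (Γ : Finset (ℤ × ℤ)) : Prop :=
  ∃ P : Set (ℝ × ℝ), Convex ℝ P ∧ IsOpen P ∧
    ∀ v : ℤ × ℤ, v ∈ Γ ↔ ((v.1 : ℝ), (v.2 : ℝ)) ∈ P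

/-- The reduced Laplacian as an additive group homomorphism on `ℤ^Γ`. -/
def lapHom (Γ : Finset (ℤ × ℤ)) : (↥Γ → ℤ) →+ (↥Γ → ℤ) where
  toFun := lap Γ
  map_zero' := lap_zero Γ
  map_add' := lap_add Γ

/-- The sandpile group `G_Γ = ℤ^Γ / Δ_Γ(ℤ^Γ)`. -/
def SandpileGroup (Γ : Finset (ℤ × ℤ)) : Type :=
  (↥Γ → ℤ) ⧸ (lapHom Γ).range

instance (Γ : Finset (ℤ × ℤ)) : AddCommGroup (SandpileGroup Γ) :=
  inferInstanceAs (AddCommGroup ((↥Γ → ℤ) ⧸ (lapHom Γ).range))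

/-- The canonical projection `ℤ^Γ → G_Γ`. -/
def sandMk (Γ : Finset (ℤ × ℤ)) : (↥Γ → ℤ) →+ SandpileGroup Γ :=
  QuotientAddGroup.mk' _

/-- The rational-valued harmonic functions on `Γ`, as an additive subgroup of `ℚ^Γ`. -/
def HarmQ (Γ : Finset (ℤ × ℤ)) : AddSubgroup (↥Γ → ℚ) where
  carrier := {f | Harmonic Γ f}
  zero_mem' := fun v _ => by rw [lap_zero]; rfl
  add_mem' := by
    intro a b ha hb v hv
    rw [lap_add]
    simp [ha v hv, hb v hv]
  neg_mem' := by
    intro a ha v hv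
    rw [lap_neg]
    simp [ha v hv]

/-- The integer-valued harmonic functions on `Γ`, regarded as an additive
subgroup of `ℚ^Γ`. -/
def HarmZinQ (Γ : Finset (ℤ × ℤ)) : AddSubgroup (↥Γ → ℚ) where
  carrier := {f | Harmonic Γ f ∧ ∀ v : ↥Γ, ∃ z : ℤ, f v = (z : ℚ)}
  zero_mem' := ⟨(HarmQ Γ).zero_mem, fun v => ⟨0, by simp⟩⟩
  add_mem' := by
    intro a b ha hb
    refine ⟨(HarmQ Γ).add_mem ha.1 hb.1, fun v => ?_⟩
    obtain ⟨z1, h1⟩ := ha.2 v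
    obtain ⟨z2, h2⟩ := hb.2 v
    exact ⟨z1 + z2, by simp [h1, h2]⟩
  neg_mem' := by
    intro a ha
    refine ⟨(HarmQ Γ).neg_mem ha.1, fun v => ?_⟩
    obtain ⟨z, h⟩ := ha.2 v
    exact ⟨-z, by simp [h]⟩

/-- The rational-valued harmonic functions on `Γ` whose Laplacian is
integer-valued, as an additive subgroup of `ℚ^Γ`. -/
def HarmIntLap (Γ : Finset (ℤ × ℤ)) : AddSubgroup (↥Γ → ℚ) where
  carrier := {f | Harmonic Γ f ∧ ∀ v : ↥Γ, ∃ z : ℤ, lap Γ f v = (z : ℚ)}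
  zero_mem' := ⟨(HarmQ Γ).zero_mem, fun v => ⟨0, by rw [lap_zero]; simp⟩⟩
  add_mem' := by
    intro a b ha hb
    refine ⟨(HarmQ Γ).add_mem ha.1 hb.1, fun v => ?_⟩
    obtain ⟨z1, h1⟩ := ha.2 v
    obtain ⟨z2, h2⟩ := hb.2 v
    exact ⟨z1 + z2, by rw [lap_add]; simp [h1, h2]⟩
  neg_mem' := by
    intro a ha
    refine ⟨(HarmQ Γ).neg_mem ha.1, fun v => ?_⟩
    obtain ⟨z, h⟩ := ha.2 v
    exact ⟨-z, by rw [lap_neg]; simp [h]⟩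

/-- The integer-valued harmonic functions on `Γ`, as a `ℤ`-submodule of `ℤ^Γ`. -/
def HarmZ (Γ : Finset (ℤ × ℤ)) : Submodule ℤ (↥Γ → ℤ) where
  carrier := {f | Harmonic Γ f}
  zero_mem' := fun v _ => by rw [lap_zero]; rfl
  add_mem' := by
    intro a b ha hb v hv
    rw [lap_add]
    simp [ha v hv, hb v hv]
  smul_mem' := by
    intro c a ha v hv
    rw [lap_smul]
    simp [ha v hv]

/-- The rational-valued harmonic functions on `Γ`, as a `ℚ`-submodule of `ℚ^Γ`. -/
def HarmQmod (Γ : Finset (ℤ × ℤ)) : Submodule ℚ (↥Γ → ℚ) where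
  carrier := {f | Harmonic Γ f}
  zero_mem' := fun v _ => by rw [lap_zero]; rfl
  add_mem' := by
    intro a b ha hb v hv
    rw [lap_add]
    simp [ha v hv, hb v hv]
  smul_mem' := by
    intro c a ha v hv
    rw [lap_smul]
    simp [ha v hv]

/-- The subgroup `ℤ ⊂ ℚ` (range of the integer cast). -/
def intsInQ : AddSubgroup ℚ := (Int.castAddHom ℚ).range
section Aux

lemma adj_symm {u v : ℤ × ℤ} (h : adj u v) : adj v u := by
  unfold adj at *; ring_nf at *; linarith

lemma adj_iff {u v : ℤ × ℤ} : adj u v ↔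
    u = v + (1,0) ∨ u = v - (1,0) ∨ u = v + (0,1) ∨ u = v - (0,1) := by
  unfold adj
  constructor
  · intro h
    have h1 : u.1 - v.1 ≤ 1 ∧ -1 ≤ u.1 - v.1 := by constructor <;> nlinarith [sq_nonneg (u.2 - v.2)]
    have h2 : u.2 - v.2 ≤ 1 ∧ -1 ≤ u.2 - v.2 := by constructor <;> nlinarith [sq_nonneg (u.1 - v.1)]
    rcases u with ⟨a, b⟩; rcases v with ⟨c, d⟩
    simp only [Prod.mk_add_mk, Prod.mk_sub_mk, Prod.mk.injEq] at *
    obtain ⟨h1a, h1b⟩ := h1; obtain ⟨h2a, h2b⟩ := h2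
    interval_cases ha : (a - c) <;> interval_cases hb : (b - d) <;> omega
  · rintro (rfl | rfl | rfl | rfl) <;> simp [Prod.ext_iff] <;> ring

/-- The four neighbours of a lattice point. -/
def nbrs (v : ℤ × ℤ) : Finset (ℤ × ℤ) := {v + (1,0), v - (1,0), v + (0,1), v - (0,1)}

lemma mem_nbrs {u v : ℤ × ℤ} : u ∈ nbrs v ↔ adj u v := by
  simp [nbrs, adj_iff]

lemma card_nbrs (v : ℤ × ℤ) : (nbrs v).card = 4 := by
  rcases v with ⟨a, b⟩
  simp [nbrs, Prod.ext_iff]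
  rw [Finset.card_insert_of_notMem, Finset.card_insert_of_notMem,
    Finset.card_insert_of_notMem] <;> simp [Prod.ext_iff] <;> omega

end Aux
section MaxPrinciple

variable (Γ : Finset (ℤ × ℤ))

lemma filter_card_le (v : ↥Γ) :
    (Γ.attach.filter (fun w => adj w.1 v.1)).card ≤ 4 := by
  have h : (Γ.attach.filter (fun w => adj w.1 v.1)).card
      = ((Γ.attach.filter (fun w => adj w.1 v.1)).image Subtype.val).card := by
    rw [Finset.card_image_of_injective _ Subtype.val_injective]
  rw [h, ← card_nbrs v.1]
  apply Finset.card_le_card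
  intro u hu
  rw [Finset.mem_image] at hu
  obtain ⟨w, hw, rfl⟩ := hu
  exact mem_nbrs.mpr (Finset.mem_filter.mp hw).2

lemma max_step (f : ↥Γ → ℚ) (hf : lap Γ f = 0) (M : ℚ) (hM : 0 < M)
    (hub : ∀ u : ↥Γ, f u ≤ M) (v : ↥Γ) (hv : f v = M) :
    ∃ hw : v.1 + (1,0) ∈ Γ, f ⟨v.1 + (1,0), hw⟩ = M := by
  set F := Γ.attach.filter (fun w => adj w.1 v.1) with hF
  have hsum : ∑ w ∈ F, f w = 4 * M := by
    have := congrFun hf v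
    simp only [lap, Pi.zero_apply, sub_eq_zero] at this
    rw [← hF] at this
    rw [this, hv]
  have hterm : ∀ w ∈ F, 0 ≤ M - f w := fun w _ => by linarith [hub w]
  have hsum2 : ∑ w ∈ F, (M - f w) = F.card * M - 4 * M := by
    rw [Finset.sum_sub_distrib, hsum, Finset.sum_const, nsmul_eq_mul]
  have hle : (F.card : ℚ) * M - 4 * M ≤ 0 := by
    have : (F.card : ℚ) ≤ 4 := by exact_mod_cast filter_card_le Γ v
    nlinarith
  have hzero : ∑ w ∈ F, (M - f w) = 0 := le_antisymm (by rw [hsum2]; exact hle)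
    (Finset.sum_nonneg hterm)
  have hvals : ∀ w ∈ F, f w = M := by
    intro w hw
    have := (Finset.sum_eq_zero_iff_of_nonneg hterm).mp hzero w hw
    linarith
  have hcard : F.card = 4 := by
    have : (F.card : ℚ) * M = 4 * M := by rw [hsum2] at hzero; linarith
    have : (F.card : ℚ) = 4 := by
      exact mul_right_cancel₀ (ne_of_gt hM) this
    exact_mod_cast this
  -- image of F equals nbrs v
  have himg : F.image Subtype.val = nbrs v.1 := by
    apply Finset.eq_of_subset_of_card_le
    · intro u hu
      rw [Finset.mem_image] at hu
      obtain ⟨w, hw, rfl⟩ := hu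
      exact mem_nbrs.mpr (Finset.mem_filter.mp hw).2
    · rw [card_nbrs, Finset.card_image_of_injective _ Subtype.val_injective, hcard]
  have hmem : v.1 + (1,0) ∈ F.image Subtype.val := by
    rw [himg]; simp [nbrs]
  rw [Finset.mem_image] at hmem
  obtain ⟨w, hwF, hw1⟩ := hmem
  refine ⟨hw1 ▸ w.2, ?_⟩
  have heq : (⟨v.1 + (1,0), hw1 ▸ w.2⟩ : ↥Γ) = w := Subtype.ext hw1.symm
  rw [heq]
  exact hvals w hwF

lemma eq_zero_of_lap_eq_zero (f : ↥Γ → ℚ) (hf : lap Γ f = 0) : f = 0 := by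
  by_contra hne
  -- reduce to: exists f with lap f = 0, max M > 0
  have key : ∀ g : ↥Γ → ℚ, lap Γ g = 0 → ∀ (M : ℚ), 0 < M → (∀ u, g u ≤ M) →
      ∀ v : ↥Γ, g v = M → False := by
    intro g hg M hM hub v hvM
    have step : ∀ n : ℕ, ∃ h : (v.1.1 + n, v.1.2) ∈ Γ, g ⟨(v.1.1 + n, v.1.2), h⟩ = M := by
      intro n
      induction n with
      | zero => exact ⟨by simpa using v.2, by simpa using hvM⟩
      | succ n ih =>
        obtain ⟨hmem, hval⟩ := ih
        obtain ⟨hw, hwval⟩ := max_step Γ g hg M hM hub ⟨_, hmem⟩ hval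
        refine ⟨?_, ?_⟩
        · convert hw using 2 <;> simp <;> ring
        · convert hwval using 3 <;> simp <;> ring
    have : (↑Γ : Set (ℤ × ℤ)).Infinite := by
      apply Set.infinite_of_injective_forall_mem
        (f := fun n : ℕ => ((v.1.1 + n, v.1.2) : ℤ × ℤ))
      · intro a b hab
        simp only [Prod.mk.injEq] at hab
        omega
      · intro n
        obtain ⟨h, -⟩ := step n
        exact h
    exact this Γ.finite_toSet
  -- there is a point where f ≠ 0
  have hex : ∃ v : ↥Γ, f v ≠ 0 := by
    by_contra h
    push_neg at h
    exact hne (funext fun v => h v)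
  obtain ⟨v0, hv0⟩ := hex
  have : Nonempty ↥Γ := ⟨v0⟩
  -- max of f
  obtain ⟨vmax, -, hmax⟩ := Finset.exists_max_image Finset.univ f ⟨v0, Finset.mem_univ v0⟩
  obtain ⟨vmin, -, hmin⟩ := Finset.exists_min_image Finset.univ f ⟨v0, Finset.mem_univ v0⟩
  rcases lt_trichotomy (f vmax) 0 with h | h | h
  · -- all values negative?? then -f has positive max
    have : 0 < (-f) vmin := by
      have := hmax v0 (Finset.mem_univ v0)
      have := hmin v0 (Finset.mem_univ v0)
      simp only [Pi.neg_apply]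
      nlinarith [hmax vmin (Finset.mem_univ vmin)]
    exact key (-f) (by rw [lap_neg, hf, neg_zero]) ((-f) vmin) this
      (fun u => by simpa using hmin u (Finset.mem_univ u)) vmin rfl
  · rcases lt_trichotomy (f vmin) 0 with h2 | h2 | h2
    · have : 0 < (-f) vmin := by simpa using h2
      exact key (-f) (by rw [lap_neg, hf, neg_zero]) ((-f) vmin) this
        (fun u => by simpa using hmin u (Finset.mem_univ u)) vmin rfl
    · exact hv0 (le_antisymm (h ▸ hmax v0 (Finset.mem_univ v0))
        (h2 ▸ hmin v0 (Finset.mem_univ v0)))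
    · linarith [hmax vmin (Finset.mem_univ vmin)]
  · exact key f hf (f vmax) h (fun u => hmax u (Finset.mem_univ u)) vmax rfl

lemma lap_injective_q (hG : Γ.Nonempty) :
    Function.Injective (lap Γ : (↥Γ → ℚ) → (↥Γ → ℚ)) := by
  intro a b hab
  have h : lap Γ (a - b) = 0 := by
    have : a - b = a + (-b) := by ring
    rw [this, lap_add, lap_neg, hab]; ring
  have := eq_zero_of_lap_eq_zero Γ (a - b) h
  funext v
  have := congrFun this v
  simp only [Pi.sub_apply, Pi.zero_apply, sub_eq_zero] at this
  exact this

/-- The laplacian as a `ℚ`-linear map. -/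
noncomputable def lapLin (Γ : Finset (ℤ × ℤ)) : (↥Γ → ℚ) →ₗ[ℚ] (↥Γ → ℚ) where
  toFun := lap Γ
  map_add' := lap_add Γ
  map_smul' := lap_smul Γ

lemma lap_surjective_q (hG : Γ.Nonempty) :
    Function.Surjective (lap Γ : (↥Γ → ℚ) → (↥Γ → ℚ)) :=
  (LinearMap.injective_iff_surjective (f := lapLin Γ)).mp (lap_injective_q Γ hG)

end MaxPrinciple
section Interior

variable (Γ : Finset (ℤ × ℤ))

lemma lap_intCast (g : ↥Γ → ℤ) (v : ↥Γ) :
    lap Γ (fun u => (g u : ℚ)) v = ((lap Γ g v : ℤ) : ℚ) := by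
  simp only [lap]
  push_cast
  ring

lemma mem_boundary_iff (v : ℤ × ℤ) :
    v ∈ boundary Γ ↔ v ∈ Γ ∧ ∃ w : ℤ × ℤ, w ∉ Γ ∧ adj w v := by
  unfold boundary
  rw [@Finset.mem_filter _ _ (Classical.decPred _)]

lemma interior_all_adj {v : ↥Γ} (hv : v.1 ∉ boundary Γ) {u : ℤ × ℤ} (hu : adj u v.1) :
    u ∈ Γ := by
  by_contra h
  exact hv ((mem_boundary_iff Γ v.1).mpr ⟨v.2, u, h, hu⟩)

/-- Integer delta function. -/
def idelta (w : ↥Γ) : ↥Γ → ℤ := fun u => if u = w then 1 else 0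

lemma lap_idelta (w u : ↥Γ) :
    lap Γ (idelta Γ w) u = (if adj w.1 u.1 then 1 else 0) - 4 * (if u = w then 1 else 0) := by
  unfold lap idelta
  rw [Finset.sum_ite_eq' (Γ.attach.filter (fun z => adj z.1 u.1)) w (fun _ => (1 : ℤ))]
  simp [Finset.mem_filter]

lemma eq_sum_idelta (f : ↥Γ → ℤ) : f = ∑ u : ↥Γ, f u • idelta Γ u := by
  funext z
  simp only [Finset.sum_apply, Pi.smul_apply, idelta, smul_eq_mul, mul_ite, mul_one, mul_zero]
  rw [Finset.sum_ite_eq Finset.univ z f]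
  simp

/-- The x-coordinate measure. -/
def xm (v : ↥Γ) : ℕ := (Γ.filter (fun u => v.1.1 < u.1)).card

lemma xm_lt {v u : ↥Γ} (h : v.1.1 < u.1.1) : xm Γ u < xm Γ v := by
  apply Finset.card_lt_card
  constructor
  · intro z hz
    rw [Finset.mem_filter] at *
    exact ⟨hz.1, by omega⟩
  · intro hsub
    have := hsub (Finset.mem_filter.mpr ⟨u.2, h⟩)
    rw [Finset.mem_filter] at this
    omega

/-- Subgroup of integer functions realizable as Laplacians on the interior. -/
def Tsub : Submodule ℤ (↥Γ → ℤ) where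
  carrier := {f | ∃ g, ∀ v : ↥Γ, v.1 ∉ boundary Γ → lap Γ g v = f v}
  zero_mem' := ⟨0, fun v _ => by simp [lap_zero]⟩
  add_mem' := by
    rintro a b ⟨g1, h1⟩ ⟨g2, h2⟩
    exact ⟨g1 + g2, fun v hv => by rw [lap_add]; simp [h1 v hv, h2 v hv]⟩
  smul_mem' := by
    rintro c a ⟨g, h⟩
    exact ⟨c • g, fun v hv => by rw [lap_smul]; simp [h v hv]⟩

lemma idelta_mem (v : ↥Γ) : idelta Γ v ∈ Tsub Γ := by
  suffices h : ∀ (n : ℕ) (v : ↥Γ), xm Γ v = n → idelta Γ v ∈ Tsub Γ from h _ v rfl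
  clear v
  intro n
  induction n using Nat.strong_induction_on with
  | _ n ih =>
  intro v hn
  by_cases hb : v.1 ∈ boundary Γ
  · exact ⟨0, fun u hu => by
      rw [lap_zero]
      unfold idelta
      have : u ≠ v := fun h => hu (h ▸ hb)
      simp [this]⟩
  · have hadj1 : adj (v.1 + (1,0)) v.1 := adj_iff.mpr (Or.inl rfl)
    have hw' : v.1 + (1,0) ∈ Γ := interior_all_adj Γ hb hadj1
    set w : ↥Γ := ⟨v.1 + (1,0), hw'⟩ with hwdef
    have hvw : v ≠ w := by
      intro h
      have := congrArg (fun z => z.1.1) h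
      simp [hwdef] at this
    -- the remainder
    set r : ↥Γ → ℤ := fun u => lap Γ (idelta Γ w) u - idelta Γ v u with hrdef
    have hr_supp : ∀ u : ↥Γ, r u ≠ 0 → v.1.1 < u.1.1 := by
      intro u hru
      by_cases huv : u = v
      · exfalso
        apply hru
        rw [hrdef]
        simp only [huv, lap_idelta, idelta]
        simp [hadj1, hvw]
        simp [hwdef, hadj1]
      · have hru2 : lap Γ (idelta Γ w) u ≠ 0 := by
          intro h0
          apply hru
          rw [hrdef]
          simp only [h0, idelta]
          rw [if_neg huv]
          ring
        rw [lap_idelta] at hru2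
        by_cases huw : u = w
        · rw [huw, hwdef]; simp
        · rw [if_neg huw] at hru2
          have hadj : adj w.1 u.1 := by
            by_contra h
            rw [if_neg h] at hru2
            simp at hru2
          rcases adj_iff.mp hadj with h | h | h | h
          all_goals {
            have h1 := congrArg Prod.fst h
            have h2 := congrArg Prod.snd h
            simp [hwdef] at h1 h2
            first
            | omega
            | · -- case w = u + (1,0) : u = v, contradiction
                exfalso
                apply huv
                apply Subtype.ext
                have : u.1 = v.1 := by
                  apply Prod.ext <;> omega
                exact this
          }
    have hr_mem : r ∈ Tsub Γ := by
      rw [eq_sum_idelta Γ r]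
      apply Submodule.sum_mem
      intro u _
      by_cases hru : r u = 0
      · rw [hru, zero_smul]; exact Submodule.zero_mem _
      · apply Submodule.smul_mem
        exact ih (xm Γ u) (hn ▸ xm_lt Γ (hr_supp u hru)) u rfl
    have hlap_mem : lap Γ (idelta Γ w) ∈ Tsub Γ := ⟨idelta Γ w, fun u _ => rfl⟩
    have : idelta Γ v = lap Γ (idelta Γ w) - r := by
      funext u; rw [hrdef]; simp
    rw [this]
    exact Submodule.sub_mem _ hlap_mem hr_mem

lemma interior_surj (f : ↥Γ → ℤ) :
    ∃ g : ↥Γ → ℤ, ∀ v : ↥Γ, v.1 ∉ boundary Γ → lap Γ g v = f v := by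
  have : f ∈ Tsub Γ := by
    rw [eq_sum_idelta Γ f]
    exact Submodule.sum_mem _ (fun u _ => Submodule.smul_mem _ _ (idelta_mem Γ u))
  exact this

end Interior
section Assembly

variable (Γ : Finset (ℤ × ℤ))

/-- integer part extraction -/
def gfun (H : ↥Γ → ℚ) : ↥Γ → ℤ := fun v => (lap Γ H v).num

lemma gfun_spec {H : ↥Γ → ℚ} (h : ∀ v : ↥Γ, ∃ z : ℤ, lap Γ H v = (z : ℚ)) (v : ↥Γ) :
    ((gfun Γ H v : ℤ) : ℚ) = lap Γ H v := by
  obtain ⟨z, hz⟩ := h v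
  rw [gfun, hz, Rat.num_intCast]

lemma mem_intsInQ {q : ℚ} : q ∈ intsInQ ↔ ∃ z : ℤ, (z : ℚ) = q :=
  ⟨fun ⟨z, h⟩ => ⟨z, h⟩, fun ⟨z, h⟩ => ⟨z, h⟩⟩

/-- The boundary evaluation hom on harmonic functions. -/
def pi0 : ↥(HarmQ Γ) →+ (↥(boundary Γ) → ℚ ⧸ intsInQ) :=
  AddMonoidHom.mk'
    (fun H => fun b => QuotientAddGroup.mk (lap Γ (H : ↥Γ → ℚ) ⟨b.1, boundary_subset Γ b.2⟩))
    (by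
      intro H1 H2
      funext b
      show QuotientAddGroup.mk (lap Γ ((H1 + H2 : ↥(HarmQ Γ)) : ↥Γ → ℚ) ⟨b.1, boundary_subset Γ b.2⟩) = _
      rw [AddSubgroup.coe_add, lap_add]
      rfl)

lemma pi0_apply (H : ↥(HarmQ Γ)) (b : ↥(boundary Γ)) :
    pi0 Γ H b = QuotientAddGroup.mk (lap Γ (H : ↥Γ → ℚ) ⟨b.1, boundary_subset Γ b.2⟩) := rfl

lemma pi0_ker : (HarmZinQ Γ).addSubgroupOf (HarmQ Γ) ≤ (pi0 Γ).ker := by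
  intro H hH
  rw [AddSubgroup.mem_addSubgroupOf] at hH
  rw [AddMonoidHom.mem_ker]
  funext b
  show QuotientAddGroup.mk _ = 0
  rw [QuotientAddGroup.eq_zero_iff, mem_intsInQ]
  obtain ⟨hharm, hint⟩ := hH
  have hcast : (H : ↥Γ → ℚ) = fun v => (((H : ↥Γ → ℚ) v).num : ℚ) := by
    funext v
    obtain ⟨z, hz⟩ := hint v
    rw [hz, Rat.num_intCast]
  refine ⟨lap Γ (fun v => ((H : ↥Γ → ℚ) v).num) ⟨b.1, boundary_subset Γ b.2⟩, ?_⟩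
  rw [← lap_intCast]
  congr 1
  exact hcast.symm

lemma pi0_surj (hne : Γ.Nonempty) : Function.Surjective (pi0 Γ) := by
  intro t
  set q : ↥(boundary Γ) → ℚ := fun b => Quotient.out (t b) with hq
  obtain ⟨Hf, hHf⟩ := lap_surjective_q Γ hne
    (fun u => if h : u.1 ∈ boundary Γ then q ⟨u.1, h⟩ else 0)
  have hharm : Harmonic Γ Hf := by
    intro v hv
    rw [congrFun hHf v]
    exact dif_neg hv
  refine ⟨⟨Hf, hharm⟩, ?_⟩
  funext b
  rw [pi0_apply]
  rw [congrFun hHf ⟨b.1, boundary_subset Γ b.2⟩]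
  show QuotientAddGroup.mk (if h : (b : ℤ × ℤ) ∈ boundary Γ then q ⟨b.1, h⟩ else 0) = t b
  rw [dif_pos b.2]
  show QuotientAddGroup.mk (Quotient.out (t b)) = t b
  exact Quotient.out_eq (t b)

/-- The map `H ↦ [-Δ H]` from harmonic functions with integral laplacian
to the sandpile group. -/
def Phi : ↥(HarmIntLap Γ) →+ SandpileGroup Γ :=
  AddMonoidHom.mk' (fun H => sandMk Γ (-(gfun Γ (H : ↥Γ → ℚ))))
    (by
      intro H1 H2
      show sandMk Γ (-(gfun Γ ((H1 + H2 : ↥(HarmIntLap Γ)) : ↥Γ → ℚ))) = _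
      have hsum : gfun Γ ((H1 + H2 : ↥(HarmIntLap Γ)) : ↥Γ → ℚ)
          = gfun Γ (H1 : ↥Γ → ℚ) + gfun Γ (H2 : ↥Γ → ℚ) := by
        funext v
        have e1 := gfun_spec Γ H1.2.2 v
        have e2 := gfun_spec Γ H2.2.2 v
        have hz : ∀ u : ↥Γ, ∃ z : ℤ,
            lap Γ ((H1 + H2 : ↥(HarmIntLap Γ)) : ↥Γ → ℚ) u = (z : ℚ) := by
          intro u
          refine ⟨gfun Γ (H1 : ↥Γ → ℚ) u + gfun Γ (H2 : ↥Γ → ℚ) u, ?_⟩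
          rw [AddSubgroup.coe_add, lap_add]
          push_cast
          rw [gfun_spec Γ H1.2.2 u, gfun_spec Γ H2.2.2 u]
          rfl
        have e0 := gfun_spec Γ hz v
        rw [AddSubgroup.coe_add, lap_add] at e0
        have : ((gfun Γ ((H1 + H2 : ↥(HarmIntLap Γ)) : ↥Γ → ℚ) v : ℤ) : ℚ)
            = ((gfun Γ (H1 : ↥Γ → ℚ) v + gfun Γ (H2 : ↥Γ → ℚ) v : ℤ) : ℚ) := by
          push_cast
          rw [e1, e2]
          exact e0
        exact_mod_cast this
      rw [hsum, neg_add, map_add])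

lemma Phi_apply (H : ↥(HarmIntLap Γ)) : Phi Γ H = sandMk Γ (-(gfun Γ (H : ↥Γ → ℚ))) := rfl

lemma Phi_surj (hne : Γ.Nonempty) : Function.Surjective (Phi Γ) := by
  intro c
  obtain ⟨f, rfl⟩ := QuotientAddGroup.mk'_surjective (lapHom Γ).range c
  obtain ⟨g, hg⟩ := interior_surj Γ (fun v => -(f v))
  obtain ⟨u, hu⟩ := lap_surjective_q Γ hne (fun v => ((-(f v) - lap Γ g v : ℤ) : ℚ))
  have hharm : Harmonic Γ u := by
    intro v hv
    rw [congrFun hu v]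
    have h2 := hg v hv
    show ((-(f v) - lap Γ g v : ℤ) : ℚ) = 0
    rw [h2]
    push_cast
    ring
  have hint : ∀ v : ↥Γ, ∃ z : ℤ, lap Γ u v = (z : ℚ) :=
    fun v => ⟨-(f v) - lap Γ g v, congrFun hu v⟩
  refine ⟨⟨u, hharm, hint⟩, ?_⟩
  rw [Phi_apply]
  have hgf : gfun Γ u = fun v => -(f v) - lap Γ g v := by
    funext v
    have h1 := gfun_spec Γ hint v
    rw [congrFun hu v] at h1
    exact_mod_cast h1
  have hng : -(gfun Γ u) = f + lapHom Γ g := by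
    funext v
    rw [hgf]
    show -(-(f v) - lap Γ g v) = f v + lap Γ g v
    ring
  rw [hng, map_add]
  have hzero : sandMk Γ (lapHom Γ g) = 0 := by
    show QuotientAddGroup.mk' (lapHom Γ).range (lapHom Γ g) = 0
    rw [QuotientAddGroup.mk'_apply, QuotientAddGroup.eq_zero_iff]
    exact ⟨g, rfl⟩
  rw [hzero, add_zero]
  rfl

end Assembly
section Final

variable (Γ : Finset (ℤ × ℤ))

lemma harmIntLap_le : HarmIntLap Γ ≤ HarmQ Γ := fun _ hf => hf.1

/-- The boundary homomorphism on the quotient. -/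
noncomputable def piQ :
    (↥(HarmQ Γ) ⧸ (HarmZinQ Γ).addSubgroupOf (HarmQ Γ)) →+ (↥(boundary Γ) → ℚ ⧸ intsInQ) :=
  QuotientAddGroup.lift _ (pi0 Γ) (fun x hx => pi0_ker Γ hx)

lemma piQ_mk (H : ↥(HarmQ Γ)) : piQ Γ (QuotientAddGroup.mk H) = pi0 Γ H := rfl

lemma piQ_surj (hne : Γ.Nonempty) : Function.Surjective (piQ Γ) := by
  intro t
  obtain ⟨H, hH⟩ := pi0_surj Γ hne t
  exact ⟨QuotientAddGroup.mk H, hH⟩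

lemma theta_ker_mem (H : ↥(HarmIntLap Γ)) :
    (QuotientAddGroup.mk (AddSubgroup.inclusion (harmIntLap_le Γ) H) :
      ↥(HarmQ Γ) ⧸ (HarmZinQ Γ).addSubgroupOf (HarmQ Γ)) ∈ (piQ Γ).ker := by
  rw [AddMonoidHom.mem_ker, piQ_mk]
  funext b
  rw [pi0_apply]
  show QuotientAddGroup.mk _ = 0
  rw [QuotientAddGroup.eq_zero_iff, mem_intsInQ]
  obtain ⟨z, hz⟩ := H.2.2 ⟨b.1, boundary_subset Γ b.2⟩
  exact ⟨z, hz.symm⟩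

/-- The map from integral-laplacian harmonic functions into the kernel of `piQ`. -/
noncomputable def theta : ↥(HarmIntLap Γ) →+ ↥(piQ Γ).ker :=
  AddMonoidHom.codRestrict
    ((QuotientAddGroup.mk' ((HarmZinQ Γ).addSubgroupOf (HarmQ Γ))).comp
      (AddSubgroup.inclusion (harmIntLap_le Γ)))
    (piQ Γ).ker (fun H => theta_ker_mem Γ H)

lemma theta_apply (H : ↥(HarmIntLap Γ)) :
    (theta Γ H : ↥(HarmQ Γ) ⧸ (HarmZinQ Γ).addSubgroupOf (HarmQ Γ))
      = QuotientAddGroup.mk (AddSubgroup.inclusion (harmIntLap_le Γ) H) := rfl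

lemma theta_surj : Function.Surjective (theta Γ) := by
  rintro ⟨x, hx⟩
  revert hx
  induction x using QuotientAddGroup.induction_on with
  | H H =>
  intro hx
  have hmem : (H : ↥Γ → ℚ) ∈ HarmIntLap Γ := by
    refine ⟨H.2, fun v => ?_⟩
    by_cases hb : v.1 ∈ boundary Γ
    · have h0 := congrFun (AddMonoidHom.mem_ker.mp hx) ⟨v.1, hb⟩
      rw [piQ_mk, pi0_apply] at h0
      have h0' : QuotientAddGroup.mk (lap Γ (H : ↥Γ → ℚ) v) = (0 : ℚ ⧸ intsInQ) := by
        exact h0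
      rw [QuotientAddGroup.eq_zero_iff, mem_intsInQ] at h0'
      obtain ⟨z, hz⟩ := h0'
      exact ⟨z, hz.symm⟩
    · exact ⟨0, by rw [H.2 v hb]; simp⟩
  exact ⟨⟨H.1, hmem⟩, Subtype.ext rfl⟩

lemma ker_eq : (theta Γ).ker = (Phi Γ).ker := by
  ext H
  rw [AddMonoidHom.mem_ker, AddMonoidHom.mem_ker]
  constructor
  · intro h
    have h1 : (AddSubgroup.inclusion (harmIntLap_le Γ) H)
        ∈ (HarmZinQ Γ).addSubgroupOf (HarmQ Γ) := by
      rw [← QuotientAddGroup.eq_zero_iff]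
      rw [← theta_apply]
      rw [h]
      rfl
    rw [AddSubgroup.mem_addSubgroupOf] at h1
    obtain ⟨hharm, hint⟩ := h1
    rw [Phi_apply]
    set z : ↥Γ → ℤ := fun v => ((H : ↥Γ → ℚ) v).num with hzdef
    have hcast : (H : ↥Γ → ℚ) = fun v => (z v : ℚ) := by
      funext v
      obtain ⟨w, hw⟩ := hint v
      have hw' : (H : ↥Γ → ℚ) v = (w : ℚ) := hw
      rw [hzdef]
      simp only [hw', Rat.num_intCast]
    have hg : gfun Γ (H : ↥Γ → ℚ) = lapHom Γ z := by
      funext v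
      have hs := gfun_spec Γ H.2.2 v
      have hs2 : lap Γ (H : ↥Γ → ℚ) v = ((lap Γ z v : ℤ) : ℚ) := by
        conv_lhs => rw [hcast]
        exact lap_intCast Γ z v
      rw [hs2] at hs
      show gfun Γ (H : ↥Γ → ℚ) v = lap Γ z v
      exact_mod_cast hs
    rw [hg]
    show QuotientAddGroup.mk' (lapHom Γ).range (-(lapHom Γ z)) = 0
    rw [QuotientAddGroup.mk'_apply, QuotientAddGroup.eq_zero_iff]
    exact ⟨-z, map_neg (lapHom Γ) z⟩
  · intro h
    have hrange : -(gfun Γ (H : ↥Γ → ℚ)) ∈ (lapHom Γ).range := by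
      rw [← QuotientAddGroup.eq_zero_iff]
      exact h
    obtain ⟨hfun, hh⟩ := hrange
    have hlap : lap Γ ((H : ↥Γ → ℚ) + fun v => ((hfun v : ℤ) : ℚ)) = 0 := by
      rw [lap_add]
      funext v
      have h1 := gfun_spec Γ H.2.2 v
      have h2 := lap_intCast Γ hfun v
      have h3 : lapHom Γ hfun v = -(gfun Γ (H : ↥Γ → ℚ) v) := congrFun hh v
      show lap Γ (H : ↥Γ → ℚ) v + lap Γ (fun v => ((hfun v : ℤ) : ℚ)) v = 0
      rw [h2]
      show lap Γ (H : ↥Γ → ℚ) v + ((lap Γ hfun v : ℤ) : ℚ) = 0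
      have : lap Γ hfun v = lapHom Γ hfun v := rfl
      rw [this, h3, ← h1]
      push_cast
      ring
    have hzero := eq_zero_of_lap_eq_zero Γ _ hlap
    have hval : ∀ v : ↥Γ, (H : ↥Γ → ℚ) v = ((-(hfun v) : ℤ) : ℚ) := by
      intro v
      have := congrFun hzero v
      simp only [Pi.add_apply, Pi.zero_apply] at this
      push_cast
      linarith
    apply Subtype.ext
    rw [theta_apply]
    show _ = ((0 : ↥(piQ Γ).ker) : ↥(HarmQ Γ) ⧸ (HarmZinQ Γ).addSubgroupOf (HarmQ Γ))
    rw [AddSubgroup.coe_zero, QuotientAddGroup.eq_zero_iff, AddSubgroup.mem_addSubgroupOf]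
    exact ⟨H.2.1, fun v => ⟨-(hfun v), hval v⟩⟩

/-- The isomorphism between the kernel of `piQ` and the sandpile group. -/
noncomputable def eIso (hne : Γ.Nonempty) : ↥(piQ Γ).ker ≃+ SandpileGroup Γ :=
  ((QuotientAddGroup.quotientKerEquivOfSurjective (theta Γ) (theta_surj Γ)).symm.trans
    (QuotientAddGroup.quotientAddEquivOfEq (ker_eq Γ))).trans
    (QuotientAddGroup.quotientKerEquivOfSurjective (Phi Γ) (Phi_surj Γ hne))

lemma eIso_theta (hne : Γ.Nonempty) (x : ↥(HarmIntLap Γ)) :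
    eIso Γ hne (theta Γ x) = Phi Γ x := by
  show (QuotientAddGroup.quotientKerEquivOfSurjective (Phi Γ) (Phi_surj Γ hne))
    ((QuotientAddGroup.quotientAddEquivOfEq (ker_eq Γ))
      ((QuotientAddGroup.quotientKerEquivOfSurjective (theta Γ) (theta_surj Γ)).symm
        (theta Γ x))) = Phi Γ x
  have h1 : (QuotientAddGroup.quotientKerEquivOfSurjective (theta Γ) (theta_surj Γ)).symm
      (theta Γ x) = QuotientAddGroup.mk x := by
    rw [AddEquiv.symm_apply_eq]
    rfl
  rw [h1, QuotientAddGroup.quotientAddEquivOfEq_mk]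
  rfl

end Final
/-- For a finite nonempty convex domain `Γ ⊂ ℤ²`, the map
`π : ℋ_ℚ^Γ/ℋ_ℤ^Γ → (ℚ/ℤ)^{∂Γ}` sending the class of `H` to
`((Δ_Γ H)(b) mod ℤ)_{b ∈ ∂Γ}` is a well-defined surjective group homomorphism,
and its kernel is isomorphic to the sandpile group `G_Γ` via the map sending
the class of `H` to `[−Δ_Γ H]`; i.e. there is an exact sequence
`0 → G_Γ → ℋ_ℚ^Γ/ℋ_ℤ^Γ → (ℚ/ℤ)^{∂Γ} → 0`. -/
theorem sandpile_exact_sequence (Γ : Finset (ℤ × ℤ)) (hne : Γ.Nonempty)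
    (hconv : IsConvexDomain Γ) :
    ∃ π : (↥(HarmQ Γ) ⧸ (HarmZinQ Γ).addSubgroupOf (HarmQ Γ)) →+ (↥(boundary Γ) → ℚ ⧸ intsInQ),
      (∀ H : ↥(HarmQ Γ),
        π (QuotientAddGroup.mk H) =
          fun b : ↥(boundary Γ) =>
            QuotientAddGroup.mk (lap Γ (↑H : ↥Γ → ℚ) ⟨b.1, boundary_subset Γ b.2⟩)) ∧
      Function.Surjective π ∧
      ∃ e : ↥π.ker ≃+ SandpileGroup Γ,
        ∀ (H : ↥(HarmQ Γ)) (hH : QuotientAddGroup.mk H ∈ π.ker) (g : ↥Γ → ℤ),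
          (∀ v : ↥Γ, (g v : ℚ) = lap Γ (↑H : ↥Γ → ℚ) v) →
          e ⟨QuotientAddGroup.mk H, hH⟩ = sandMk Γ (-g) := by
  refine ⟨piQ Γ, fun H => rfl, piQ_surj Γ hne, eIso Γ hne, ?_⟩
  intro H hH g hg
  have hmem : (H : ↥Γ → ℚ) ∈ HarmIntLap Γ := ⟨H.2, fun v => ⟨g v, (hg v).symm⟩⟩
  have hth : theta Γ ⟨(H : ↥Γ → ℚ), hmem⟩ = ⟨QuotientAddGroup.mk H, hH⟩ := Subtype.ext rfl
  rw [← hth, eIso_theta, Phi_apply]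
  congr 1
  have hgf : gfun Γ ((⟨(H : ↥Γ → ℚ), hmem⟩ : ↥(HarmIntLap Γ)) : ↥Γ → ℚ) = g := by
    funext v
    have h1 := gfun_spec Γ hmem.2 v
    rw [← hg v] at h1
    exact_mod_cast h1
  rw [hgf]
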